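/- Let A be an n×n irreducible entrywise nonnegative matrix with d ≥ 1 positive diagonal entries. Then A^{2n−d−1} is entrywise positive, i.e., the index of primitivity of A is at most 2n − d − 1. -/

import Mathlib

open Matrix Finset

/-- A nonnegative matrix is irreducible when its directed graph is strongly connected,
equivalently each pair of indices is joined by a positive entry of some positive power. -/
def MatIrreducible {n : ℕ} (A : Matrix (Fin n) (Fin n) ℝ) : Prop :=
  ∀ i j : Fin n, ∃ k : ℕ, 0 < k ∧ 0 < (A ^ k) i j

/-- A walk of length `k` from `i` to `j` in the digraph of `A`. -/
def AWalk {n : ℕ} (A : Matrix (Fin n) (Fin n) ℝ) (k : ℕ) (i j : Fin n) : Prop :=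
  ∃ f : ℕ → Fin n, f 0 = i ∧ f k = j ∧ ∀ t < k, 0 < A (f t) (f (t + 1))

section aux

variable {n : ℕ} {A : Matrix (Fin n) (Fin n) ℝ}

lemma pow_entry_nonneg (hA : ∀ i j, 0 ≤ A i j) (k : ℕ) (i j : Fin n) :
    0 ≤ (A ^ k) i j := by
  induction k generalizing j with
  | zero =>
    rw [pow_zero, Matrix.one_apply]
    split <;> norm_num
  | succ k ih =>
    rw [pow_succ, Matrix.mul_apply]
    exact Finset.sum_nonneg fun m _ => mul_nonneg (ih m) (hA m j)

lemma matPow_pos_iff (hA : ∀ i j, 0 ≤ A i j) (k : ℕ) (i j : Fin n) :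
    0 < (A ^ k) i j ↔ AWalk A k i j := by
  induction k generalizing j with
  | zero =>
    rw [pow_zero, Matrix.one_apply]
    constructor
    · intro h
      split at h
      · next heq =>
        subst heq
        exact ⟨fun _ => i, rfl, rfl, fun t ht => absurd ht (by omega)⟩
      · norm_num at h
    · rintro ⟨f, h0, hk, -⟩
      have : i = j := by rw [← h0, hk]
      simp [this]
  | succ k ih =>
    rw [pow_succ, Matrix.mul_apply]
    constructor
    · intro h
      have h' : ∑ m : Fin n, (0 : ℝ) < ∑ m : Fin n, (A ^ k) i m * A m j := by
        simpa using h
      obtain ⟨m, -, hm⟩ := Finset.exists_lt_of_sum_lt h'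
      have h1 : 0 < (A ^ k) i m := by
        rcases (pow_entry_nonneg hA k i m).lt_or_eq with h1 | h1
        · exact h1
        · rw [← h1, zero_mul] at hm; exact absurd hm (lt_irrefl 0)
      have h2 : 0 < A m j := by
        rcases (hA m j).lt_or_eq with h2 | h2
        · exact h2
        · rw [← h2, mul_zero] at hm; exact absurd hm (lt_irrefl 0)
      obtain ⟨f, hf0, hfk, hfe⟩ := (ih m).mp h1
      refine ⟨fun t => if t ≤ k then f t else j, by simp [hf0], by simp, ?_⟩
      intro t ht
      by_cases h' : t < k
      · simpa [show t ≤ k by omega, show t + 1 ≤ k by omega] using hfe t h'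
      · have ht' : t = k := by omega
        subst ht'
        simpa [hfk] using h2
    · rintro ⟨f, hf0, hfk, hfe⟩
      have h1 : 0 < (A ^ k) i (f k) :=
        (ih (f k)).mpr ⟨f, hf0, rfl, fun t ht => hfe t (by omega)⟩
      have h2 : 0 < A (f k) j := by
        have := hfe k (by omega)
        rwa [hfk] at this
      calc (0 : ℝ) < (A ^ k) i (f k) * A (f k) j := mul_pos h1 h2
        _ ≤ ∑ m, (A ^ k) i m * A m j :=
          Finset.single_le_sum
            (fun m _ => mul_nonneg (pow_entry_nonneg hA k i m) (hA m j))
            (Finset.mem_univ (f k))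

lemma awalk_concat {p q : ℕ} {i v j : Fin n}
    (h1 : AWalk A p i v) (h2 : AWalk A q v j) : AWalk A (p + q) i j := by
  obtain ⟨f, hf0, hfp, hfe⟩ := h1
  obtain ⟨g, hg0, hgq, hge⟩ := h2
  refine ⟨fun t => if t < p then f t else g (t - p), ?_, ?_, ?_⟩
  · by_cases h : 0 < p
    · simpa [h] using hf0
    · have hp0 : p = 0 := by omega
      subst hp0
      have hvi : v = i := by rw [← hfp, hf0]
      simp [hg0, hvi]
  · simp only [show ¬ p + q < p by omega, if_false, Nat.add_sub_cancel_left, hgq]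
  · intro t ht
    by_cases h1' : t + 1 < p
    · simpa [h1', show t < p by omega] using hfe t (by omega)
    · by_cases h2' : t + 1 = p
      · have htp : t < p := by omega
        simp only [htp, if_pos, if_neg h1']
        have : g (t + 1 - p) = f (t + 1) := by
          rw [show t + 1 - p = 0 by omega, hg0, ← hfp, ← h2']
        rw [this]
        exact hfe t (by omega)
      · have htp : ¬ t < p := by omega
        simp only [htp, if_neg, if_neg h1']
        have e1 : t + 1 - p = (t - p) + 1 := by omega
        rw [e1]
        exact hge (t - p) (by omega)

lemma awalk_loop {v : Fin n} (hv : 0 < A v v) (m : ℕ) : AWalk A m v v :=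
  ⟨fun _ => v, rfl, rfl, fun _ _ => hv⟩

lemma awalk_cut {k a b : ℕ} {f : ℕ → Fin n}
    (hf : ∀ t < k, 0 < A (f t) (f (t + 1))) (hab : a < b) (hbk : b ≤ k)
    (heq : f a = f b) :
    AWalk A (k - (b - a)) (f 0) (f k) := by
  refine ⟨fun t => if t < a then f t else f (t + (b - a)), ?_, ?_, ?_⟩
  · by_cases h : 0 < a
    · simp [h]
    · have ha0 : a = 0 := by omega
      subst ha0
      simpa using heq.symm
  · show (if k - (b - a) < a then f (k - (b - a)) else f (k - (b - a) + (b - a))) = f k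
    rw [if_neg (show ¬ k - (b - a) < a by omega),
      show k - (b - a) + (b - a) = k by omega]
  · intro t ht
    by_cases h1' : t + 1 < a
    · simpa [h1', show t < a by omega] using hf t (by omega)
    · by_cases h2' : t + 1 = a
      · have hta : t < a := by omega
        simp only [hta, if_pos, if_neg h1']
        have : f (t + 1 + (b - a)) = f (t + 1) := by
          rw [h2', show a + (b - a) = b by omega, ← heq]
        rw [this]
        exact hf t (by omega)
      · have hta : ¬ t < a := by omega
        simp only [hta, if_neg, if_neg h1']
        have e1 : t + 1 + (b - a) = (t + (b - a)) + 1 := by omega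
        rw [e1]
        exact hf (t + (b - a)) (by omega)

lemma reach_short (hn : 0 < n) :
    ∀ k (i j : Fin n), AWalk A k i j → ∃ q, q ≤ n - 1 ∧ AWalk A q i j := by
  intro k
  induction k using Nat.strong_induction_on with
  | _ k ih =>
    intro i j hw
    by_cases hk : k ≤ n - 1
    · exact ⟨k, hk, hw⟩
    · obtain ⟨f, h0, hk', hedge⟩ := hw
      have hcard : (univ : Finset (Fin n)).card < (Finset.range (k + 1)).card := by
        simp only [Finset.card_range, Finset.card_univ, Fintype.card_fin]
        omega
      obtain ⟨a, ha, b, hb, hne, heq⟩ :=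
        Finset.exists_ne_map_eq_of_card_lt_of_maps_to hcard
          (fun x _ => Finset.mem_univ (f x))
      simp only [Finset.mem_range] at ha hb
      rcases Nat.lt_or_gt_of_ne hne with h | h
      · have hcut := awalk_cut hedge h (by omega) heq
        rw [h0, hk'] at hcut
        exact ih _ (by omega) i j hcut
      · have hcut := awalk_cut hedge h (by omega) heq.symm
        rw [h0, hk'] at hcut
        exact ih _ (by omega) i j hcut

lemma reach_to_D (D : Finset (Fin n)) :
    ∀ k (i j : Fin n), AWalk A k i j → j ∈ D →
      ∃ v p, v ∈ D ∧ p ≤ n - D.card ∧ AWalk A p i v := by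
  intro k
  induction k using Nat.strong_induction_on with
  | _ k ih =>
    intro i j hw hj
    by_cases hk : k ≤ n - D.card
    · exact ⟨j, k, hj, hk, hw⟩
    · obtain ⟨f, h0, hk', hedge⟩ := hw
      by_cases hmid : ∃ t, t < k ∧ f t ∈ D
      · obtain ⟨t, ht, htD⟩ := hmid
        exact ih t ht i (f t) ⟨f, h0, rfl, fun s hs => hedge s (by omega)⟩ htD
      · push_neg at hmid
        have hcard : ((univ : Finset (Fin n)) \ D).card < (Finset.range k).card := by
          rw [Finset.card_sdiff_of_subset (Finset.subset_univ D), Finset.card_range,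
            Finset.card_univ, Fintype.card_fin]
          omega
        obtain ⟨a, ha, b, hb, hne, heq⟩ :=
          Finset.exists_ne_map_eq_of_card_lt_of_maps_to hcard
            (fun x hx => by
              simp only [Finset.mem_coe, Finset.mem_sdiff, Finset.mem_univ, true_and]
              exact hmid x (Finset.mem_range.mp hx))
        simp only [Finset.mem_range] at ha hb
        rcases Nat.lt_or_gt_of_ne hne with h | h
        · have hcut := awalk_cut hedge h (by omega) heq
          rw [h0, hk'] at hcut
          exact ih _ (by omega) i j hcut hj
        · have hcut := awalk_cut hedge h (by omega) heq.symm
          rw [h0, hk'] at hcut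
          exact ih _ (by omega) i j hcut hj

end aux

/-- Horn–Johnson, Theorem 8.5.9: an irreducible `n × n` nonnegative matrix with `d ≥ 1`
positive diagonal entries satisfies `A^{2n-d-1} > 0` entrywise; in particular its index of
primitivity is at most `2n - d - 1`. -/
theorem index_of_primitivity_le {n : ℕ}
    (A : Matrix (Fin n) (Fin n) ℝ)
    (hA : ∀ i j, 0 ≤ A i j)
    (hirr : MatIrreducible A)
    (d : ℕ)
    (hd : d = (Finset.univ.filter (fun i : Fin n => 0 < A i i)).card)
    (hd1 : 1 ≤ d) :
    ∀ i j, 0 < (A ^ (2 * n - d - 1)) i j := by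
  intro i j
  set D : Finset (Fin n) := Finset.univ.filter (fun i : Fin n => 0 < A i i) with hD
  have hdn : d ≤ n := by
    rw [hd]
    simpa using Finset.card_filter_le (univ : Finset (Fin n)) _
  have hn : 0 < n := by omega
  -- get some vertex with positive diagonal
  obtain ⟨w, hw⟩ := Finset.card_pos.mp (show 0 < D.card by omega)
  -- walk from i to w
  obtain ⟨k₁, -, hk₁⟩ := hirr i w
  have hw1 : AWalk A k₁ i w := (matPow_pos_iff hA k₁ i w).mp hk₁
  obtain ⟨v, p, hvD, hp, hwalk1⟩ := reach_to_D D k₁ i w hw1 hw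
  have hvv : 0 < A v v := by
    rw [hD] at hvD
    exact (Finset.mem_filter.mp hvD).2
  have hp' : p ≤ n - d := by rw [hd]; exact hp
  -- walk from v to j
  obtain ⟨k₂, -, hk₂⟩ := hirr v j
  have hw2 : AWalk A k₂ v j := (matPow_pos_iff hA k₂ v j).mp hk₂
  obtain ⟨q, hq, hwalk2⟩ := reach_short hn k₂ v j hw2
  -- assemble
  set L := 2 * n - d - 1 with hL
  have hpq : p + q ≤ L := by omega
  have hloop : AWalk A (L - (p + q)) v v := awalk_loop hvv _
  have hfinal : AWalk A (p + ((L - (p + q)) + q)) i j :=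
    awalk_concat hwalk1 (awalk_concat hloop hwalk2)
  have he : p + ((L - (p + q)) + q) = L := by omega
  rw [he] at hfinal
  exact (matPow_pos_iff hA L i j).mpr hfinal
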